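/- Let T₀ = Σ_{i=0}^∞ ((−2)^i x_0^{2i}/(2i)!)·Δ^i and T₁ = Σ_{i=0}^∞ ((−2)^i x_0^{2i+1}/(2i+1)!)·Δ^i, as operators on B = ℂ[x_0] ⊗ A (the sums are locally finite since Δ is locally nilpotent on A). Then for every g in A, Δ'(T₀(g)) = 0 and Δ'(T₁(g)) = 0, where Δ' = ∂_{x_0}² + 2Δ. -/

import Mathlib

open TensorProduct MvPolynomial

noncomputable section

variable (n m : ℕ)

/-- bosonic polynomial part with the extra variable x₀ (index `Sum.inl 0`) -/
abbrev PolyB (n : ℕ) := MvPolynomial (Fin (n + 1) ⊕ Fin n) ℂ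
abbrev ExtA (m : ℕ) := ExteriorAlgebra ℂ ((Fin m ⊕ Fin m) → ℂ)
/-- B = ℂ[x₀] ⊗ A -/
abbrev SAlgB (n m : ℕ) := PolyB n ⊗[ℂ] ExtA m

def x0v : PolyB n := X (Sum.inl 0)
def xv (i : Fin n) : PolyB n := X (Sum.inl i.succ)
def yv (i : Fin n) : PolyB n := X (Sum.inr i)
def θv (r : Fin m) : ExtA m := ExteriorAlgebra.ι ℂ (Pi.single (Sum.inl r) 1)
def ϑv (r : Fin m) : ExtA m := ExteriorAlgebra.ι ℂ (Pi.single (Sum.inr r) 1)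

def dθ (r : Fin m) : Module.End ℂ (ExtA m) :=
  CliffordAlgebra.contractLeft (Q := (0 : QuadraticForm ℂ ((Fin m ⊕ Fin m) → ℂ)))
    (LinearMap.proj (Sum.inl r))
def dϑ (r : Fin m) : Module.End ℂ (ExtA m) :=
  CliffordAlgebra.contractLeft (Q := (0 : QuadraticForm ℂ ((Fin m ⊕ Fin m) → ℂ)))
    (LinearMap.proj (Sum.inr r))

def pdx0 : Module.End ℂ (SAlgB n m) :=
  TensorProduct.map ((pderiv (Sum.inl 0) : Derivation ℂ (PolyB n) (PolyB n)) : PolyB n →ₗ[ℂ] PolyB n) LinearMap.id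
def pdx (i : Fin n) : Module.End ℂ (SAlgB n m) :=
  TensorProduct.map ((pderiv (Sum.inl i.succ) : Derivation ℂ (PolyB n) (PolyB n)) : PolyB n →ₗ[ℂ] PolyB n) LinearMap.id
def pdy (i : Fin n) : Module.End ℂ (SAlgB n m) :=
  TensorProduct.map ((pderiv (Sum.inr i) : Derivation ℂ (PolyB n) (PolyB n)) : PolyB n →ₗ[ℂ] PolyB n) LinearMap.id
def pdθ (r : Fin m) : Module.End ℂ (SAlgB n m) := TensorProduct.map LinearMap.id (dθ m r)
def pdϑ (r : Fin m) : Module.End ℂ (SAlgB n m) := TensorProduct.map LinearMap.id (dϑ m r)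

def mx0 : Module.End ℂ (SAlgB n m) := LinearMap.mulLeft ℂ (x0v n ⊗ₜ[ℂ] 1)
def mx (i : Fin n) : Module.End ℂ (SAlgB n m) := LinearMap.mulLeft ℂ (xv n i ⊗ₜ[ℂ] 1)
def my (i : Fin n) : Module.End ℂ (SAlgB n m) := LinearMap.mulLeft ℂ (yv n i ⊗ₜ[ℂ] 1)
def mθ (r : Fin m) : Module.End ℂ (SAlgB n m) := LinearMap.mulLeft ℂ ((1 : PolyB n) ⊗ₜ[ℂ] θv m r)
def mϑ (r : Fin m) : Module.End ℂ (SAlgB n m) := LinearMap.mulLeft ℂ ((1 : PolyB n) ⊗ₜ[ℂ] ϑv m r)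

/-- η = Σ_i x_i y_i + Σ_r θ_r ϑ_r -/
def ηelt : SAlgB n m :=
  (∑ i : Fin n, (xv n i * yv n i) ⊗ₜ[ℂ] (1 : ExtA m))
    + ∑ r : Fin m, (1 : PolyB n) ⊗ₜ[ℂ] (θv m r * ϑv m r)

/-- Δ = Σ_i ∂_{x_i}∂_{y_i} + Σ_r ∂_{θ_r}∂_{ϑ_r} (no x₀ part) -/
def ΔS : Module.End ℂ (SAlgB n m) :=
  (∑ i : Fin n, pdx n m i ∘ₗ pdy n m i) + ∑ r : Fin m, pdθ n m r ∘ₗ pdϑ n m r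

/-- Δ' = ∂_{x₀}² + 2Δ -/
def Δ' : Module.End ℂ (SAlgB n m) := pdx0 n m ∘ₗ pdx0 n m + (2 : ℂ) • ΔS n m
/-- η' = multiplication by x₀² + 2η -/
def η'op : Module.End ℂ (SAlgB n m) :=
  LinearMap.mulLeft ℂ ((x0v n ^ 2) ⊗ₜ[ℂ] (1 : ExtA m) + (2 : ℂ) • ηelt n m)

/-- T₀(g) = Σ_i ((−2)^i x₀^{2i}/(2i)!)·Δ^i(g); the sum is finite since Δ is
locally nilpotent on A. -/
def T0 (g : SAlgB n m) : SAlgB n m :=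
  ∑ᶠ i : ℕ, ((-2 : ℂ) ^ i / (2 * i).factorial) • (mx0 n m ^ (2 * i)) ((ΔS n m ^ i) g)

/-- T₁(g) = Σ_i ((−2)^i x₀^{2i+1}/(2i+1)!)·Δ^i(g) -/
def T1 (g : SAlgB n m) : SAlgB n m :=
  ∑ᶠ i : ℕ, ((-2 : ℂ) ^ i / (2 * i + 1).factorial) • (mx0 n m ^ (2 * i + 1)) ((ΔS n m ^ i) g)

/- ---------------- auxiliary lemmas ---------------- -/

lemma pderiv_comm' {σ : Type*} {R : Type*} [CommRing R] (i j : σ) (p : MvPolynomial σ R) :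
    pderiv i (pderiv j p) = pderiv j (pderiv i p) := by
  induction p using MvPolynomial.induction_on with
  | C a => simp [pderiv_C]
  | add p q hp hq => simp [map_add, hp, hq]
  | mul_X p k ih =>
    classical
    simp only [pderiv_mul, map_add, ih, pderiv_X, Pi.single_apply]
    split_ifs <;> simp [pderiv_one] <;> ring

namespace Tharm

/-- multiplication by x₀ on the polynomial factor -/
def X0 (n : ℕ) : Module.End ℂ (PolyB n) := LinearMap.mulLeft ℂ (x0v n)
/-- pderiv as an endomorphism -/
def Dv (n : ℕ) (j : Fin (n+1) ⊕ Fin n) : Module.End ℂ (PolyB n) :=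
  ((pderiv j : Derivation ℂ (PolyB n) (PolyB n)) : PolyB n →ₗ[ℂ] PolyB n)

lemma mx0_eq (n m : ℕ) :
    mx0 n m = TensorProduct.map (X0 n) (LinearMap.id : ExtA m →ₗ[ℂ] ExtA m) := by
  apply TensorProduct.ext'
  intro p a
  simp [mx0, X0, Algebra.TensorProduct.tmul_mul_tmul]

lemma mapl_comp {n m : ℕ} (f g : Module.End ℂ (PolyB n)) :
    (TensorProduct.map f (LinearMap.id : ExtA m →ₗ[ℂ] ExtA m)) ∘ₗ
        TensorProduct.map g LinearMap.id = TensorProduct.map (f ∘ₗ g) LinearMap.id := by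
  rw [← TensorProduct.map_comp, LinearMap.id_comp]

lemma comm_lr {n m : ℕ} (f : Module.End ℂ (PolyB n)) (g : Module.End ℂ (ExtA m)) :
    (TensorProduct.map f (LinearMap.id : ExtA m →ₗ[ℂ] ExtA m)) ∘ₗ TensorProduct.map LinearMap.id g
      = TensorProduct.map LinearMap.id g ∘ₗ TensorProduct.map f LinearMap.id := by
  rw [← TensorProduct.map_comp, ← TensorProduct.map_comp, LinearMap.id_comp,
    LinearMap.id_comp, LinearMap.comp_id, LinearMap.comp_id]

lemma Dv_X0_comm {n : ℕ} (j : Fin (n+1) ⊕ Fin n) (hj : Sum.inl 0 ≠ j) :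
    Dv n j ∘ₗ X0 n = X0 n ∘ₗ Dv n j := by
  apply LinearMap.ext
  intro p
  simp only [Dv, X0, LinearMap.comp_apply, LinearMap.mulLeft_apply, Derivation.coeFn_coe,
    x0v, pderiv_mul, pderiv_X_of_ne hj, zero_mul, zero_add]

lemma D0_X0 (n : ℕ) : Dv n (Sum.inl 0) ∘ₗ X0 n = X0 n ∘ₗ Dv n (Sum.inl 0) + 1 := by
  apply LinearMap.ext
  intro p
  simp only [Dv, X0, LinearMap.comp_apply, LinearMap.add_apply, Module.End.one_apply,
    LinearMap.mulLeft_apply, Derivation.coeFn_coe, x0v, pderiv_mul, pderiv_X_self, one_mul]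
  ring

lemma Dv_comm {n : ℕ} (i j : Fin (n+1) ⊕ Fin n) :
    Dv n i ∘ₗ Dv n j = Dv n j ∘ₗ Dv n i := by
  apply LinearMap.ext
  intro p
  simp only [Dv, LinearMap.comp_apply, Derivation.coeFn_coe]
  exact pderiv_comm' i j p

lemma pdx0_eq (n m : ℕ) :
    pdx0 n m = TensorProduct.map (Dv n (Sum.inl 0)) (LinearMap.id : ExtA m →ₗ[ℂ] ExtA m) := rfl
lemma pdx_eq (n m : ℕ) (i : Fin n) :
    pdx n m i = TensorProduct.map (Dv n (Sum.inl i.succ)) (LinearMap.id : ExtA m →ₗ[ℂ] ExtA m) := rfl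
lemma pdy_eq (n m : ℕ) (i : Fin n) :
    pdy n m i = TensorProduct.map (Dv n (Sum.inr i)) (LinearMap.id : ExtA m →ₗ[ℂ] ExtA m) := rfl

lemma hDX (n m : ℕ) : pdx0 n m ∘ₗ mx0 n m = mx0 n m ∘ₗ pdx0 n m + 1 := by
  rw [mx0_eq, pdx0_eq, mapl_comp, D0_X0, TensorProduct.map_add_left, mapl_comp,
    show (1 : Module.End ℂ (PolyB n)) = LinearMap.id from rfl, TensorProduct.map_id]
  rfl

set_option maxHeartbeats 1000000 in
lemma hLX (n m : ℕ) : ΔS n m ∘ₗ mx0 n m = mx0 n m ∘ₗ ΔS n m := by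
  show ΔS n m * mx0 n m = mx0 n m * ΔS n m
  unfold ΔS
  rw [add_mul, mul_add, Finset.sum_mul, Finset.mul_sum, Finset.sum_mul, Finset.mul_sum]
  congr 1
  · refine Finset.sum_congr rfl fun i _ => ?_
    show (pdx n m i ∘ₗ pdy n m i) ∘ₗ mx0 n m = mx0 n m ∘ₗ (pdx n m i ∘ₗ pdy n m i)
    have hx : Dv n (Sum.inl i.succ) ∘ₗ X0 n = X0 n ∘ₗ Dv n (Sum.inl i.succ) :=
      Dv_X0_comm _ (fun h => Fin.succ_ne_zero i (Sum.inl_injective h).symm)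
    have hy : Dv n (Sum.inr i) ∘ₗ X0 n = X0 n ∘ₗ Dv n (Sum.inr i) := Dv_X0_comm _ (by simp)
    have hcomp : (Dv n (Sum.inl i.succ) ∘ₗ Dv n (Sum.inr i)) ∘ₗ X0 n
        = X0 n ∘ₗ Dv n (Sum.inl i.succ) ∘ₗ Dv n (Sum.inr i) := by
      rw [LinearMap.comp_assoc, hy, ← LinearMap.comp_assoc, hx, LinearMap.comp_assoc]
    rw [mx0_eq, pdx_eq, pdy_eq, mapl_comp, mapl_comp, mapl_comp, hcomp]
  · refine Finset.sum_congr rfl fun r _ => ?_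
    show (pdθ n m r ∘ₗ pdϑ n m r) ∘ₗ mx0 n m = mx0 n m ∘ₗ (pdθ n m r ∘ₗ pdϑ n m r)
    have h1 : pdθ n m r ∘ₗ pdϑ n m r
        = TensorProduct.map (LinearMap.id : PolyB n →ₗ[ℂ] PolyB n) (dθ m r ∘ₗ dϑ m r) := by
      unfold pdθ pdϑ
      rw [← TensorProduct.map_comp, LinearMap.id_comp]
    rw [h1, mx0_eq, ← comm_lr]

set_option maxHeartbeats 1000000 in
lemma hDL (n m : ℕ) : pdx0 n m ∘ₗ ΔS n m = ΔS n m ∘ₗ pdx0 n m := by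
  show pdx0 n m * ΔS n m = ΔS n m * pdx0 n m
  unfold ΔS
  rw [add_mul, mul_add, Finset.sum_mul, Finset.mul_sum, Finset.sum_mul, Finset.mul_sum]
  refine congrArg₂ (· + ·) ?_ ?_
  · refine Finset.sum_congr rfl fun i _ => ?_
    show pdx0 n m ∘ₗ (pdx n m i ∘ₗ pdy n m i) = (pdx n m i ∘ₗ pdy n m i) ∘ₗ pdx0 n m
    have hcomp : Dv n (Sum.inl 0) ∘ₗ Dv n (Sum.inl i.succ) ∘ₗ Dv n (Sum.inr i)
        = (Dv n (Sum.inl i.succ) ∘ₗ Dv n (Sum.inr i)) ∘ₗ Dv n (Sum.inl 0) := by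
      rw [← LinearMap.comp_assoc, Dv_comm (Sum.inl 0) (Sum.inl i.succ), LinearMap.comp_assoc,
        Dv_comm (Sum.inl 0) (Sum.inr i), ← LinearMap.comp_assoc]
    rw [pdx0_eq, pdx_eq, pdy_eq, mapl_comp, mapl_comp, mapl_comp, hcomp]
  · refine Finset.sum_congr rfl fun r _ => ?_
    show pdx0 n m ∘ₗ (pdθ n m r ∘ₗ pdϑ n m r) = (pdθ n m r ∘ₗ pdϑ n m r) ∘ₗ pdx0 n m
    have h1 : pdθ n m r ∘ₗ pdϑ n m r
        = TensorProduct.map (LinearMap.id : PolyB n →ₗ[ℂ] PolyB n) (dθ m r ∘ₗ dϑ m r) := by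
      unfold pdθ pdϑ
      rw [← TensorProduct.map_comp, LinearMap.id_comp]
    rw [h1, pdx0_eq, comm_lr]

end Tharm
namespace Tharm
section Abstract
variable {W : Type*} [AddCommGroup W] [Module ℂ W]

lemma D_pow (D X : Module.End ℂ W) (hDX : D ∘ₗ X = X ∘ₗ D + 1)
    (v : W) (hv : D v = 0) : ∀ k : ℕ, D ((X ^ k) v) = (k : ℂ) • (X ^ (k - 1)) v := by
  have hD : ∀ w, D (X w) = X (D w) + w := by
    intro w
    have := LinearMap.congr_fun hDX w
    simpa using this
  intro k
  induction k with
  | zero => simpa using hv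
  | succ k ih =>
    have h1 : (X ^ (k+1)) v = X ((X ^ k) v) := by rw [pow_succ']; rfl
    rw [h1, hD, ih, map_smul]
    cases k with
    | zero => simp
    | succ k =>
      have h2 : X ((X ^ (k + 1 - 1)) v) = (X ^ (k+1)) v := by
        rw [Nat.add_sub_cancel, pow_succ']; rfl
      rw [h2, Nat.add_sub_cancel]
      push_cast
      conv_rhs => rw [add_smul, one_smul]

lemma D_sq_pow (D X : Module.End ℂ W) (hDX : D ∘ₗ X = X ∘ₗ D + 1)
    (v : W) (hv : D v = 0) (k : ℕ) :
    D (D ((X ^ k) v)) = ((k : ℂ) * ((k - 1 : ℕ) : ℂ)) • (X ^ (k - 2)) v := by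
  rw [D_pow D X hDX v hv k, map_smul, D_pow D X hDX v hv (k-1), smul_smul]
  congr 2
  try omega

lemma coefid (p j : ℕ) :
    ((-2:ℂ)^(j+1) / (2*(j+1)+p).factorial) * ((2*(j+1)+p : ℕ):ℂ) * (((2*(j+1)+p-1 : ℕ)):ℂ)
      + 2 * ((-2:ℂ)^j / (2*j+p).factorial) = 0 := by
  have h1 : 2*(j+1)+p = (2*j+p+1)+1 := by omega
  rw [h1]
  simp only [Nat.add_sub_cancel]
  rw [Nat.factorial_succ, Nat.factorial_succ]
  have hf : ((2*j+p).factorial : ℂ) ≠ 0 := Nat.cast_ne_zero.2 (Nat.factorial_ne_zero _)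
  have ha : ((2*j+p+1 : ℕ) : ℂ) ≠ 0 := Nat.cast_ne_zero.2 (by omega)
  have hb : ((2*j+p+1+1 : ℕ) : ℂ) ≠ 0 := Nat.cast_ne_zero.2 (by omega)
  push_cast at hf ha hb ⊢
  field_simp
  ring

lemma key (D X L : Module.End ℂ W) (hDX : D ∘ₗ X = X ∘ₗ D + 1)
    (hLX : L ∘ₗ X = X ∘ₗ L) (hDL : D ∘ₗ L = L ∘ₗ D)
    (g : W) (hg : D g = 0) (N p : ℕ) (hp : p ≤ 1) (hN : (L ^ N) g = 0) :
    (D ∘ₗ D + (2:ℂ) • L) (∑ i ∈ Finset.range (N+1),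
        ((-2:ℂ)^i / (2*i+p).factorial) • (X ^ (2*i+p)) ((L ^ i) g)) = 0 := by
  have hDg : ∀ i, D ((L ^ i) g) = 0 := by
    intro i
    induction i with
    | zero => simpa using hg
    | succ i ih =>
      have h1 : (L ^ (i+1)) g = L ((L ^ i) g) := by rw [pow_succ']; rfl
      have h2 := LinearMap.congr_fun hDL ((L ^ i) g)
      simp only [LinearMap.comp_apply] at h2
      rw [h1, h2, ih, map_zero]
  have hLXk : ∀ (k : ℕ) (w : W), L ((X ^ k) w) = (X ^ k) (L w) := by
    intro k w
    have hc : Commute L X := by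
      show L * X = X * L
      rw [Module.End.mul_eq_comp, Module.End.mul_eq_comp, hLX]
    have := LinearMap.congr_fun ((hc.pow_right k).eq) w
    simpa [Module.End.mul_apply] using this
  have hLsucc : ∀ i : ℕ, L ((L ^ i) g) = (L ^ (i+1)) g := by
    intro i; rw [pow_succ']; rfl
  set c : ℕ → ℂ := fun i => (-2:ℂ)^i / (2*i+p).factorial with hc
  set A : ℕ → W := fun i => (c i * ((2*i+p : ℕ) : ℂ) * (((2*i+p-1 : ℕ)) : ℂ)) •
      (X ^ (2*i+p-2)) ((L ^ i) g) with hA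
  set B : ℕ → W := fun i => (2 * c i) • (X ^ (2*i+p)) ((L ^ (i+1)) g) with hB
  have hterm : ∀ i, (D ∘ₗ D + (2:ℂ) • L) (c i • (X ^ (2*i+p)) ((L ^ i) g)) = A i + B i := by
    intro i
    have e1 : (D ∘ₗ D) (c i • (X ^ (2*i+p)) ((L ^ i) g))
        = (c i * ((2*i+p : ℕ) : ℂ) * (((2*i+p-1 : ℕ)) : ℂ)) • (X ^ (2*i+p-2)) ((L ^ i) g) := by
      rw [LinearMap.comp_apply, map_smul, map_smul, D_sq_pow D X hDX _ (hDg i), smul_smul,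
        ← mul_assoc]
    have e2 : ((2:ℂ) • L) (c i • (X ^ (2*i+p)) ((L ^ i) g))
        = (2 * c i) • (X ^ (2*i+p)) ((L ^ (i+1)) g) := by
      rw [LinearMap.smul_apply, map_smul, hLXk, hLsucc, smul_smul]
    rw [LinearMap.add_apply, e1, e2]
  rw [map_sum]
  calc ∑ i ∈ Finset.range (N+1), (D ∘ₗ D + (2:ℂ) • L) (c i • (X ^ (2*i+p)) ((L ^ i) g))
      = ∑ i ∈ Finset.range (N+1), (A i + B i) := Finset.sum_congr rfl fun i _ => hterm i
    _ = (∑ i ∈ Finset.range (N+1), A i) + ∑ i ∈ Finset.range (N+1), B i := Finset.sum_add_distrib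
    _ = ((∑ j ∈ Finset.range N, A (j+1)) + A 0)
          + ((∑ j ∈ Finset.range N, B j) + B N) := by
        rw [Finset.sum_range_succ' A N, Finset.sum_range_succ B N]
    _ = 0 := by
        have hA0 : A 0 = 0 := by
          simp only [hA]
          interval_cases p <;> simp
        have hBN : B N = 0 := by
          have hz : (L ^ (N+1)) g = 0 := by rw [← hLsucc, hN, map_zero]
          simp only [hB, hz, map_zero, smul_zero]
        have hAB : ∀ j, A (j+1) + B j = 0 := by
          intro j
          simp only [hA, hB, hc]
          have he : 2*(j+1)+p-2 = 2*j+p := by omega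
          rw [he, ← add_smul, coefid p j, zero_smul]
        rw [hA0, hBN, add_zero, add_zero, ← Finset.sum_add_distrib]
        rw [Finset.sum_congr rfl fun j _ => hAB j]
        simp

end Abstract
end Tharm
namespace Tharm

lemma mx0_inj (n m : ℕ) : Function.Injective (mx0 n m) := by
  rw [mx0_eq]
  have h0 : Function.Injective (X0 n) := by
    intro a b hab
    have hx : (x0v n) ≠ 0 := MvPolynomial.X_ne_zero _
    have hab' : x0v n * a = x0v n * b := hab
    exact mul_left_cancel₀ hx hab'
  exact Module.Flat.rTensor_preserves_injective_linearMap (M := ExtA m) (X0 n) h0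

lemma mx0_pow_inj (n m k : ℕ) : Function.Injective ⇑(mx0 n m ^ k) := by
  induction k with
  | zero => intro a b h; simpa using h
  | succ k ih =>
    intro a b h
    rw [pow_succ] at h
    simp only [Module.End.mul_apply] at h
    exact mx0_inj n m (ih h)

lemma Tgen (n m : ℕ) (g : SAlgB n m) (hg : pdx0 n m g = 0) (p : ℕ) (hp : p ≤ 1) :
    Δ' n m (∑ᶠ i : ℕ, ((-2:ℂ)^i / (2*i+p).factorial) •
      (mx0 n m ^ (2*i+p)) ((ΔS n m ^ i) g)) = 0 := by
  by_cases hfin : ∃ N, (ΔS n m ^ N) g = 0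
  · obtain ⟨N, hN⟩ := hfin
    have hzero : ∀ i, N + 1 ≤ i → (ΔS n m ^ i) g = 0 := by
      intro i hi
      have hsplit : ΔS n m ^ i = ΔS n m ^ (i - N) * ΔS n m ^ N := by
        rw [← pow_add]
        congr 1
        omega
      rw [hsplit, Module.End.mul_apply, hN, map_zero]
    have hsupp : Function.support (fun i : ℕ => ((-2:ℂ)^i / (2*i+p).factorial) •
        (mx0 n m ^ (2*i+p)) ((ΔS n m ^ i) g)) ⊆ ↑(Finset.range (N+1)) := by
      intro i hi
      simp only [Finset.coe_range, Set.mem_Iio]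
      by_contra hlt
      push_neg at hlt
      apply hi
      show ((-2:ℂ)^i / (2*i+p).factorial) • (mx0 n m ^ (2*i+p)) ((ΔS n m ^ i) g) = 0
      rw [hzero i (by omega), map_zero, smul_zero]
    rw [finsum_eq_sum_of_support_subset _ hsupp]
    exact key (pdx0 n m) (mx0 n m) (ΔS n m) (hDX n m) (hLX n m) (hDL n m) g hg N p hp hN
  · push_neg at hfin
    have hne : ∀ i : ℕ, ((-2:ℂ)^i / (2*i+p).factorial) •
        (mx0 n m ^ (2*i+p)) ((ΔS n m ^ i) g) ≠ 0 := by
      intro i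
      have hc : ((-2:ℂ)^i / (2*i+p).factorial) ≠ 0 :=
        div_ne_zero (pow_ne_zero _ (by norm_num)) (Nat.cast_ne_zero.2 (Nat.factorial_ne_zero _))
      have hv : (mx0 n m ^ (2*i+p)) ((ΔS n m ^ i) g) ≠ 0 := by
        intro h0
        exact hfin i (mx0_pow_inj n m (2*i+p) (by rw [h0, map_zero]))
      intro h0
      apply hv
      have h1 : (((-2:ℂ)^i / (2*i+p).factorial)⁻¹ * ((-2:ℂ)^i / (2*i+p).factorial)) •
          (mx0 n m ^ (2*i+p)) ((ΔS n m ^ i) g)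
          = ((-2:ℂ)^i / (2*i+p).factorial)⁻¹ • (0 : SAlgB n m) := by
        rw [← smul_smul, h0]
      rwa [inv_mul_cancel₀ hc, one_smul, smul_zero] at h1
    rw [finsum_of_infinite_support, map_zero]
    have hsupp : Function.support (fun i : ℕ => ((-2:ℂ)^i / (2*i+p).factorial) •
        (mx0 n m ^ (2*i+p)) ((ΔS n m ^ i) g)) = Set.univ :=
      Set.eq_univ_of_forall fun i => hne i
    rw [hsupp]
    exact Set.infinite_univ

end Tharm

/-- For g in A (i.e. not involving x₀), Δ'(T₀ g) = 0 and Δ'(T₁ g) = 0. -/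
theorem T_harmonic (g : SAlgB n m) (hg : pdx0 n m g = 0) :
    Δ' n m (T0 n m g) = 0 ∧ Δ' n m (T1 n m g) = 0 := by
  constructor
  · have h := Tharm.Tgen n m g hg 0 (by norm_num)
    simp only [Nat.add_zero] at h
    rw [T0]
    exact h
  · have h := Tharm.Tgen n m g hg 1 le_rfl
    rw [T1]
    exact h
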